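/- Let U be an open subset of {u ∈ ℂ^n : u_i ≠ u_j for i ≠ j} and let A_1, …, A_n : U → M_m(ℂ) be differentiable functions satisfying the Schlesinger equations. Then for every k ∈ {1,…,n}: ∂/∂u_k ( ∑_{l=1}^n u_l A_l(u) ) = A_k(u) + [A_k(u), A_∞(u)], where A_∞(u) := −(A_1(u)+⋯+A_n(u)). In particular, if A_∞ is identically equal to the diagonal matrix diag(λ_1,…,λ_m), then for all matrix indices i, j: ∂/∂u_k ∑_{l=1}^n u_l (A_l(u))_{ji} = (1 + λ_i − λ_j)·(A_k(u))_{ji}. -/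

import Mathlib

open Matrix

attribute [local instance] Matrix.normedAddCommGroup Matrix.normedSpace

/-- Along solutions of the Schlesinger equations,
`∂/∂u_k (∑ₗ uₗ Aₗ) = A_k + [A_k, A_∞]`; in particular, if `A_∞ ≡ diag(λ_1,…,λ_m)` then
`∂/∂u_k ∑ₗ uₗ (Aₗ)_{ji} = (1 + λ_i − λ_j) (A_k)_{ji}`. -/
theorem stmt_6 (n m : ℕ) (U : Set (Fin n → ℂ)) (hU : IsOpen U)
    (hUdist : ∀ u ∈ U, ∀ i j : Fin n, i ≠ j → u i ≠ u j)
    (A : Fin n → (Fin n → ℂ) → Matrix (Fin m) (Fin m) ℂ)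
    (hdiff : ∀ i, DifferentiableOn ℂ (A i) U)
    (hSch_off : ∀ u ∈ U, ∀ i j : Fin n, i ≠ j →
      fderiv ℂ (A i) u (Pi.single j 1)
        = (u i - u j)⁻¹ • (A i u * A j u - A j u * A i u))
    (hSch_diag : ∀ u ∈ U, ∀ i : Fin n,
      fderiv ℂ (A i) u (Pi.single i 1)
        = -∑ j ∈ Finset.univ.erase i,
            (u i - u j)⁻¹ • (A i u * A j u - A j u * A i u))
    (lam : Fin m → ℂ) :
    ∀ k : Fin n, ∀ u ∈ U,
      (fderiv ℂ (fun v => ∑ l, v l • A l v) u (Pi.single k 1)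
        = A k u + (A k u * (-(∑ p, A p u)) - (-(∑ p, A p u)) * A k u)) ∧
      ((∀ v ∈ U, -(∑ p, A p v) = Matrix.diagonal lam) →
        ∀ i j : Fin m,
          fderiv ℂ (fun v => ∑ l, v l • A l v) u (Pi.single k 1) j i
            = (1 + lam i - lam j) * A k u j i) := by
  intro k u hu
  have hA : ∀ l, DifferentiableAt ℂ (A l) u := fun l =>
    (hdiff l u hu).differentiableAt (hU.mem_nhds hu)
  have hproj : ∀ l : Fin n, DifferentiableAt ℂ (fun v : Fin n → ℂ => v l) u := fun l =>
    (ContinuousLinearMap.proj l : (Fin n → ℂ) →L[ℂ] ℂ).differentiableAt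
  have hfproj : ∀ l : Fin n, fderiv ℂ (fun v : Fin n → ℂ => v l) u (Pi.single k 1)
      = (Pi.single k 1 : Fin n → ℂ) l := by
    intro l
    rw [show (fun v : Fin n → ℂ => v l)
        = ⇑(ContinuousLinearMap.proj l : (Fin n → ℂ) →L[ℂ] ℂ) from rfl,
      (ContinuousLinearMap.proj l : (Fin n → ℂ) →L[ℂ] ℂ).fderiv]
    rfl
  have hD : fderiv ℂ (fun v => ∑ l, v l • A l v) u (Pi.single k 1)
      = A k u + ∑ l, u l • fderiv ℂ (A l) u (Pi.single k 1) := by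
    rw [show fderiv ℂ (fun v => ∑ l, v l • A l v) u = ∑ l, fderiv ℂ (fun v => v l • A l v) u from
      fderiv_fun_sum (A := fun l v => v l • A l v) (fun l _ => (hproj l).smul (hA l)), ContinuousLinearMap.sum_apply]
    have hterm : ∀ l, fderiv ℂ (fun v => v l • A l v) u (Pi.single k 1)
        = u l • fderiv ℂ (A l) u (Pi.single k 1)
          + (Pi.single k 1 : Fin n → ℂ) l • A l u := by
      intro l
      rw [show fderiv ℂ (fun v => v l • A l v) u = u l • fderiv ℂ (A l) u
          + (fderiv ℂ (fun v : Fin n → ℂ => v l) u).smulRight (A l u) from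
        fderiv_fun_smul (hproj l) (hA l)]
      simp [ContinuousLinearMap.smulRight_apply, hfproj l]
    simp_rw [hterm]
    rw [Finset.sum_add_distrib, add_comm]
    congr 1
    rw [Finset.sum_eq_single k]
    · simp
    · intro b _ hb; simp [Pi.single_apply, hb]
    · simp
  have hkey : ∑ l, u l • fderiv ℂ (A l) u (Pi.single k 1)
      = A k u * (-(∑ p, A p u)) - (-(∑ p, A p u)) * A k u := by
    rw [← Finset.add_sum_erase Finset.univ
        (fun l => u l • fderiv ℂ (A l) u (Pi.single k 1)) (Finset.mem_univ k),
      hSch_diag u hu k]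
    have hterm : ∀ l ∈ Finset.univ.erase k,
        u l • fderiv ℂ (A l) u (Pi.single k 1)
        = (u l * (u l - u k)⁻¹) • (A l u * A k u - A k u * A l u) := by
      intro l hl
      rw [hSch_off u hu l k (Finset.ne_of_mem_erase hl), smul_smul]
    rw [Finset.sum_congr rfl hterm, smul_neg, Finset.smul_sum, neg_add_eq_sub,
      ← Finset.sum_sub_distrib]
    have hterm2 : ∀ l ∈ Finset.univ.erase k,
        (u l * (u l - u k)⁻¹) • (A l u * A k u - A k u * A l u)
          - u k • ((u k - u l)⁻¹ • (A k u * A l u - A l u * A k u))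
        = -(A k u * A l u - A l u * A k u) := by
      intro l hl
      have hne : u k ≠ u l := hUdist u hu k l (Finset.ne_of_mem_erase hl).symm
      have hsub : u k - u l ≠ 0 := sub_ne_zero.mpr hne
      have hsub' : u l - u k ≠ 0 := sub_ne_zero.mpr (Ne.symm hne)
      have h1 : A l u * A k u - A k u * A l u = -(A k u * A l u - A l u * A k u) :=
        (neg_sub _ _).symm
      rw [h1, smul_neg, smul_smul, ← neg_smul, ← sub_smul,
        ← neg_one_smul ℂ (A k u * A l u - A l u * A k u)]
      congr 1
      field_simp
      ring
    rw [Finset.sum_congr rfl hterm2, Finset.sum_neg_distrib,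
      Finset.sum_erase _ (by simp)]
    have : ∑ l, (A k u * A l u - A l u * A k u)
        = A k u * (∑ p, A p u) - (∑ p, A p u) * A k u := by
      rw [Finset.sum_sub_distrib, Finset.mul_sum, Finset.sum_mul]
    rw [this]
    noncomm_ring
  refine ⟨by rw [hD, hkey], ?_⟩
  intro hdiag i j
  rw [hD, hkey, hdiag u hu]
  simp [Matrix.add_apply, Matrix.sub_apply, Matrix.mul_diagonal, Matrix.diagonal_mul]
  ring
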